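/- Hopf–Rinow theorem for length spaces: Every complete, locally compact length metric space is proper, i.e. all of its closed bounded subsets are compact (equivalently, every closed ball is compact). -/

import Mathlib

/-- Comparison angle (model angle for curvature `0`) at `p` between `x` and `y`. -/
noncomputable def cmpAngle {X : Type*} [MetricSpace X] (p x y : X) : ℝ :=
  Real.arccos ((dist p x ^ 2 + dist p y ^ 2 - dist x y ^ 2) / (2 * dist p x * dist p y))

/-- The CBB(0) four-point comparison: curvature `≥ 0` in the sense of Alexandrov. -/
def CBB0Cmp (X : Type*) [MetricSpace X] : Prop :=
  ∀ p x₁ x₂ x₃ : X, p ≠ x₁ → p ≠ x₂ → p ≠ x₃ →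
    cmpAngle p x₁ x₂ + cmpAngle p x₂ x₃ + cmpAngle p x₃ x₁ ≤ 2 * Real.pi

/-- The CAT(0) four-point comparison. -/
def CAT0Cmp (X : Type*) [MetricSpace X] : Prop :=
  ∀ p₁ p₂ x₁ x₂ : X, p₁ ≠ p₂ → p₁ ≠ x₁ → p₁ ≠ x₂ → p₂ ≠ x₁ → p₂ ≠ x₂ →
    cmpAngle p₁ x₁ x₂ ≤ cmpAngle p₁ p₂ x₁ + cmpAngle p₁ p₂ x₂ ∨
    cmpAngle p₂ x₁ x₂ ≤ cmpAngle p₂ p₁ x₁ + cmpAngle p₂ p₁ x₂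

/-- Midpoint characterization of the length condition (for complete spaces). -/
def LengthMid (X : Type*) [MetricSpace X] : Prop :=
  ∀ x y : X, ∀ ε : ℝ, 0 < ε → ∃ z : X,
    dist x z ≤ dist x y / 2 + ε ∧ dist z y ≤ dist x y / 2 + ε

/-- A geodesic from `p` to `q`, affinely parametrized by `[0,1]`. -/
def IsGeodesicP {X : Type*} [MetricSpace X] (γ : ℝ → X) (p q : X) : Prop :=
  γ 0 = p ∧ γ 1 = q ∧
    ∀ s ∈ Set.Icc (0:ℝ) 1, ∀ t ∈ Set.Icc (0:ℝ) 1, dist (γ s) (γ t) = |s - t| * dist p q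

/-- A metrically convex subset: together with any two points it contains
every point lying between them. -/
def MConvexSet {X : Type*} [MetricSpace X] (K : Set X) : Prop :=
  ∀ x ∈ K, ∀ y ∈ K, ∀ z : X, dist x z + dist z y = dist x y → z ∈ K

open Metric Set in
private lemma dyadic_approx {X : Type*} [MetricSpace X] (hlen : LengthMid X) :
    ∀ n : ℕ, ∀ x z : X, ∀ k : ℕ, k ≤ 2 ^ n → ∀ ε : ℝ, 0 < ε →
      ∃ y : X, dist x y ≤ (k : ℝ) / 2 ^ n * dist x z + ε ∧
        dist y z ≤ (2 ^ n - (k : ℝ)) / 2 ^ n * dist x z + ε := by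
  intro n
  induction n with
  | zero =>
    intro x z k hk ε hε
    interval_cases k
    · exact ⟨x, by simpa using hε.le, by simp; linarith [dist_nonneg (x := x) (y := z)]⟩
    · exact ⟨z, by simp; linarith [dist_nonneg (x := x) (y := z)], by simpa using hε.le⟩
  | succ n ih =>
    intro x z k hk ε hε
    obtain ⟨m, hm1, hm2⟩ := hlen x z (ε/3) (by linarith)
    have h2n : (0:ℝ) < 2 ^ n := by positivity
    have hdm : (0:ℝ) ≤ dist x m := dist_nonneg
    have hdm2 : (0:ℝ) ≤ dist m z := dist_nonneg
    have hd : (0:ℝ) ≤ dist x z := dist_nonneg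
    by_cases hkn : k ≤ 2 ^ n
    · obtain ⟨y, hy1, hy2⟩ := ih x m k hkn (ε/3) (by linarith)
      set c : ℝ := (k : ℝ) / 2 ^ n with hc
      have hc0 : 0 ≤ c := by positivity
      have hc1 : c ≤ 1 := by
        rw [hc, div_le_one h2n]; exact_mod_cast hkn
      have e1 : (k : ℝ) / 2 ^ (n+1) = c / 2 := by rw [hc]; ring
      have e2 : (2 ^ (n+1) - (k:ℝ)) / 2 ^ (n+1) = 1 - c / 2 := by
        rw [hc]; field_simp; ring
      have e3 : (2 ^ n - (k:ℝ)) / 2 ^ n = 1 - c := by rw [hc, sub_div, div_self h2n.ne']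
      refine ⟨y, ?_, ?_⟩
      · rw [e1]
        have := hy1
        rw [hc] at this ⊢
        nlinarith [hm1, this, hc0, hc1]
      · rw [e2]
        have h3 : dist y z ≤ dist y m + dist m z := dist_triangle y m z
        rw [e3] at hy2
        nlinarith [hm1, hm2, hy2, hc0, hc1]
    · push_neg at hkn
      have hj : k - 2 ^ n ≤ 2 ^ n := by omega
      obtain ⟨y, hy1, hy2⟩ := ih m z (k - 2 ^ n) hj (ε/3) (by linarith)
      set c : ℝ := ((k - 2 ^ n : ℕ) : ℝ) / 2 ^ n with hc
      have hc0 : 0 ≤ c := by positivity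
      have hc1 : c ≤ 1 := by
        rw [hc, div_le_one h2n]; exact_mod_cast hj
      have hcast : ((k - 2 ^ n : ℕ) : ℝ) = (k : ℝ) - 2 ^ n := by
        rw [Nat.cast_sub hkn.le]; push_cast; ring
      have e1 : (k : ℝ) / 2 ^ (n+1) = 1/2 + c / 2 := by
        rw [hc, hcast, pow_succ]; field_simp; ring
      have e2 : (2 ^ (n+1) - (k:ℝ)) / 2 ^ (n+1) = (1 - c) / 2 := by
        rw [hc, hcast, pow_succ]; field_simp; ring
      have e3 : (2 ^ n - ((k - 2^n : ℕ)):ℝ) / 2 ^ n = 1 - c := by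
        rw [hc, sub_div, div_self h2n.ne']
      refine ⟨y, ?_, ?_⟩
      · rw [e1]
        have h3 : dist x y ≤ dist x m + dist m y := dist_triangle x m y
        rw [hc] at hy1
        nlinarith [hm1, hm2, hy1, hc0, hc1]
      · rw [e2]
        rw [e3] at hy2
        nlinarith [hm2, hy2, hc0, hc1]

open Metric Set in
private lemma approx_point {X : Type*} [MetricSpace X] (hlen : LengthMid X) (x z : X) (a : ℝ) (ha0 : 0 ≤ a)
    (ha1 : a ≤ dist x z) (ε : ℝ) (hε : 0 < ε) :
    ∃ y : X, dist x y ≤ a + ε ∧ dist y z ≤ dist x z - a + ε := by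
  set d := dist x z with hd
  rcases eq_or_lt_of_le (dist_nonneg : (0:ℝ) ≤ d) with h0 | h0
  · refine ⟨x, by simpa using (by linarith : (0:ℝ) ≤ a + ε), ?_⟩
    have : a = 0 := le_antisymm (by linarith) ha0
    simp [← hd, this]; linarith
  · obtain ⟨n, hn⟩ := pow_unbounded_of_one_lt (d / (ε/2)) (by norm_num : (1:ℝ) < 2)
    have h2n : (0:ℝ) < 2 ^ n := by positivity
    have hdn : d / 2 ^ n < ε / 2 := by
      rw [div_lt_iff₀ h2n]
      rw [div_lt_iff₀ (by linarith : (0:ℝ) < ε/2)] at hn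
      linarith
    set k : ℕ := ⌊a * 2 ^ n / d⌋₊ with hk
    have hk2 : k ≤ 2 ^ n := by
      have : a * 2 ^ n / d ≤ 2 ^ n := by
        rw [div_le_iff₀ h0]
        nlinarith
      calc (k:ℕ) ≤ ⌊(2:ℝ)^n⌋₊ := Nat.floor_le_floor this
        _ = 2 ^ n := by
            rw [show ((2:ℝ)^n) = ((2^n : ℕ) : ℝ) by push_cast; ring, Nat.floor_natCast]
    have hkle : (k : ℝ) ≤ a * 2 ^ n / d := Nat.floor_le (by positivity)
    have hkgt : a * 2 ^ n / d < k + 1 := Nat.lt_floor_add_one _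
    have ht1 : (k : ℝ) / 2 ^ n * d ≤ a := by
      rw [div_mul_eq_mul_div, div_le_iff₀ h2n]
      rw [le_div_iff₀ h0] at hkle
      linarith
    have ht2 : a - (k : ℝ) / 2 ^ n * d ≤ d / 2 ^ n := by
      rw [div_mul_eq_mul_div]
      rw [div_lt_iff₀ h0] at hkgt
      rw [sub_le_iff_le_add, ← add_div, le_div_iff₀ h2n]
      nlinarith
    obtain ⟨y, hy1, hy2⟩ := dyadic_approx hlen n x z k hk2 (ε/2) (by linarith)
    refine ⟨y, by rw [← hd] at hy1; linarith, ?_⟩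
    rw [← hd] at hy2
    have : (2 ^ n - (k:ℝ)) / 2 ^ n * d = d - (k:ℝ)/2^n * d := by
      field_simp
    rw [this] at hy2
    linarith

open Metric Set in
theorem hopf_rinow_proper {X : Type*} [MetricSpace X] [CompleteSpace X]
    [LocallyCompactSpace X] (hlen : LengthMid X) :
    ProperSpace X := by
  refine ⟨fun x r₁ => ?_⟩
  by_contra hcon
  -- the set of radii with compact closed ball
  set A : Set ℝ := {r : ℝ | IsCompact (closedBall x r)} with hA
  have hdown : ∀ s ∈ A, ∀ r ≤ s, r ∈ A := fun s hs r hr =>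
    hs.of_isClosed_subset isClosed_closedBall (closedBall_subset_closedBall hr)
  -- local compactness gives a small compact ball
  obtain ⟨K, hKc, hKn⟩ := exists_compact_mem_nhds x
  obtain ⟨r₀, hr₀, hball⟩ := Metric.nhds_basis_closedBall.mem_iff.1 hKn
  have hr₀A : r₀ ∈ A := hKc.of_isClosed_subset isClosed_closedBall hball
  have hAne : A.Nonempty := ⟨r₀, hr₀A⟩
  have hbdd : BddAbove A := by
    refine ⟨r₁, fun s hs => ?_⟩
    by_contra h'
    push_neg at h'
    exact hcon (hdown s hs r₁ h'.le)
  set R := sSup A with hRdef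
  have hR0 : 0 < R := lt_of_lt_of_le hr₀ (le_csSup hbdd hr₀A)
  -- Step 2: the closed ball of radius R is compact
  have hRA : IsCompact (closedBall x R) := by
    refine TotallyBounded.isCompact_of_isClosed ?_ isClosed_closedBall
    rw [Metric.totallyBounded_iff]
    intro ε hε
    set ε₀ := min ε R with hε₀def
    have hε₀ : 0 < ε₀ := lt_min hε hR0
    have hε₀R : ε₀ ≤ R := min_le_right _ _
    have hε₀ε : ε₀ ≤ ε := min_le_left _ _
    -- a slightly smaller compact ball
    have hsmall : R - 3*ε₀/8 ∈ A := by
      obtain ⟨s, hsA, hslt⟩ := exists_lt_of_lt_csSup hAne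
        (show R - 3*ε₀/8 < R by linarith)
      exact hdown s hsA _ hslt.le
    obtain ⟨t, htfin, htcov⟩ := Metric.totallyBounded_iff.1
      (hsmall.totallyBounded) (ε₀/4) (by linarith)
    refine ⟨t, htfin, fun z hz => ?_⟩
    rw [mem_closedBall, dist_comm] at hz
    -- find a point w in the smaller ball close to z
    have key : ∃ w : X, dist x w ≤ R - 3*ε₀/8 ∧ dist w z ≤ 5*ε₀/8 := by
      by_cases hd : dist x z ≤ R - ε₀/2
      · exact ⟨z, by linarith, by simp; positivity⟩
      · push_neg at hd
        obtain ⟨w, hw1, hw2⟩ := approx_point hlen x z (R - ε₀/2)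
          (by linarith) (by linarith) (ε₀/8) (by linarith)
        exact ⟨w, by linarith, by linarith⟩
    obtain ⟨w, hw1, hw2⟩ := key
    have : w ∈ closedBall x (R - 3*ε₀/8) := mem_closedBall.2 (by rw [dist_comm]; exact hw1)
    obtain ⟨y, hyt, hyw⟩ := mem_iUnion₂.1 (htcov this)
    refine mem_iUnion₂.2 ⟨y, hyt, ?_⟩
    rw [mem_ball] at hyw ⊢
    calc dist z y ≤ dist z w + dist w y := dist_triangle z w y
      _ < 5*ε₀/8 + ε₀/4 := by
          rw [dist_comm z w]; exact add_lt_add_of_le_of_lt hw2 hyw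
      _ ≤ ε := by linarith
  -- Step 3: extend beyond R, contradiction
  have hloc : ∀ y : X, ∃ r : ℝ, 0 < r ∧ IsCompact (closedBall y r) := by
    intro y
    obtain ⟨K', hK'c, hK'n⟩ := exists_compact_mem_nhds y
    obtain ⟨r, hr, hb⟩ := Metric.nhds_basis_closedBall.mem_iff.1 hK'n
    exact ⟨r, hr, hK'c.of_isClosed_subset isClosed_closedBall hb⟩
  choose rr hrr hrrc using hloc
  obtain ⟨t, htcov⟩ := hRA.elim_finite_subcover (fun y => ball y (rr y / 2))
    (fun _ => isOpen_ball)
    (fun y _ => mem_iUnion.2 ⟨y, mem_ball_self (by have := hrr y; linarith)⟩)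
  have hxK : x ∈ closedBall x R := mem_closedBall_self hR0.le
  obtain ⟨i₀, hi₀, _⟩ := mem_iUnion₂.1 (htcov hxK)
  have htne : t.Nonempty := ⟨i₀, hi₀⟩
  set δ : ℝ := min (t.inf' htne fun i => rr i / 2) R with hδdef
  have hδpos : 0 < δ := by
    refine lt_min ?_ hR0
    rw [Finset.lt_inf'_iff]
    intro i _
    have := hrr i; linarith
  have hδR : δ ≤ R := min_le_right _ _
  have hδle : ∀ i ∈ t, δ ≤ rr i / 2 := fun i hi =>
    le_trans (min_le_left _ _) (Finset.inf'_le _ hi)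
  have hbig : closedBall x (R + δ/4) ⊆ ⋃ i ∈ t, closedBall i (rr i) := by
    intro z hz
    rw [mem_closedBall, dist_comm] at hz
    have key : ∃ w : X, dist x w ≤ R ∧ dist w z ≤ δ/2 := by
      by_cases hd : dist x z ≤ R
      · exact ⟨z, hd, by simp; linarith⟩
      · push_neg at hd
        obtain ⟨w, hw1, hw2⟩ := approx_point hlen x z (R - δ/8)
          (by linarith) (by linarith) (δ/16) (by linarith)
        exact ⟨w, by linarith, by linarith⟩
    obtain ⟨w, hw1, hw2⟩ := key
    have hwK : w ∈ closedBall x R := mem_closedBall.2 (by rw [dist_comm]; exact hw1)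
    obtain ⟨i, hit, hiw⟩ := mem_iUnion₂.1 (htcov hwK)
    rw [mem_ball] at hiw
    refine mem_iUnion₂.2 ⟨i, hit, mem_closedBall.2 ?_⟩
    calc dist z i ≤ dist z w + dist w i := dist_triangle z w i
      _ ≤ δ/2 + rr i / 2 := by
          rw [dist_comm z w]
          exact add_le_add hw2 hiw.le
      _ ≤ rr i := by have := hδle i hit; linarith
  have hbigc : IsCompact (closedBall x (R + δ/4)) := by
    refine IsCompact.of_isClosed_subset ?_ isClosed_closedBall hbig
    exact t.finite_toSet.isCompact_biUnion fun i _ => hrrc i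
  have : R + δ/4 ≤ R := le_csSup hbdd hbigc
  linarith
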